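/- arXiv:0912.0150 — 2 statements merged into one kernel-verified Lean document; each statement's English description precedes it below -/
import Mathlib

section
/- For every ε with 0 < ε ≤ 1, the function f_ε is differentiable at every point of ℝ and its derivative satisfies |f_ε'(s)| ≤ 1 + ε ≤ 2 for all s ∈ ℝ. -/
open Real Set Filter

lemma gA {ε : ℝ} (hε : 0 < ε) {s : ℝ} (hs : s ≠ 0) :
    HasDerivAt (fun x : ℝ => x * |x| ^ ε) ((1 + ε) * |s| ^ ε) s := by
  rcases lt_or_gt_of_ne hs with h | h
  · have h1 : HasDerivAt (fun x : ℝ => (-x) ^ (1 + ε))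
        (((1 + ε) * (-s) ^ (1 + ε - 1)) * (-1)) s :=
      (Real.hasDerivAt_rpow_const (p := 1 + ε) (Or.inl (neg_ne_zero.mpr hs))).comp s
        (hasDerivAt_neg s)
    have hd : HasDerivAt (fun x : ℝ => -((-x) ^ (1 + ε))) ((1 + ε) * |s| ^ ε) s := by
      have := h1.neg
      refine HasDerivAt.congr_deriv this ?_
      rw [abs_of_neg h]
      ring_nf
    apply hd.congr_of_eventuallyEq
    filter_upwards [eventually_lt_nhds h] with x hx
    rw [abs_of_neg hx, Real.rpow_add (by linarith) 1 ε, Real.rpow_one]; ring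
  · have h1 : HasDerivAt (fun x : ℝ => x ^ (1 + ε)) ((1 + ε) * s ^ (1 + ε - 1)) s :=
      Real.hasDerivAt_rpow_const (p := 1 + ε) (Or.inl hs)
    have hd : HasDerivAt (fun x : ℝ => x ^ (1 + ε)) ((1 + ε) * |s| ^ ε) s := by
      convert h1 using 1
      rw [abs_of_pos h]; ring_nf
    apply hd.congr_of_eventuallyEq
    filter_upwards [eventually_gt_nhds h] with x hx
    rw [abs_of_pos hx, Real.rpow_add hx 1 ε, Real.rpow_one]

lemma gB {ε : ℝ} (hε : 0 < ε) :
    HasDerivAt (fun x : ℝ => x * |x| ^ ε) 0 0 := by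
  rw [hasDerivAt_iff_tendsto_slope]
  have h0 : Tendsto (fun x : ℝ => |x| ^ ε) (nhdsWithin 0 {(0:ℝ)}ᶜ) (nhds 0) := by
    have hc : ContinuousAt (fun x : ℝ => |x| ^ ε) 0 := by
      apply ContinuousAt.rpow_const continuous_abs.continuousAt
      right; exact hε.le
    have := hc.continuousWithinAt (s := {(0:ℝ)}ᶜ)
    simpa [ContinuousWithinAt, Real.zero_rpow hε.ne'] using this
  apply h0.congr'
  filter_upwards [self_mem_nhdsWithin] with x hx
  have hx0 : x ≠ 0 := hx
  rw [slope_def_field]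
  field_simp
  simp

lemma glin {ε : ℝ} (c : ℝ) (s : ℝ) :
    HasDerivAt (fun x : ℝ => (1 + ε) * x - c) (1 + ε) s := by
  simpa using ((hasDerivAt_id s).const_mul (1 + ε)).sub_const c

theorem stmt_3 (ε : ℝ) (hε : 0 < ε) (hε1 : ε ≤ 1) (f : ℝ → ℝ)
    (hf₁ : ∀ s : ℝ, |s| ≤ 1 → f s = s * |s| ^ ε)
    (hf₂ : ∀ s : ℝ, 1 ≤ |s| → f s = (1 + ε) * s - ε * Real.sign s) :
    ∀ s : ℝ, DifferentiableAt ℝ f s ∧ |deriv f s| ≤ 1 + ε ∧ (1 + ε : ℝ) ≤ 2 := by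
  intro s
  have hpos : (0:ℝ) < 1 + ε := by linarith
  have hbd : ∀ t : ℝ, |t| ≤ 1 → |(1 + ε) * |t| ^ ε| ≤ 1 + ε := by
    intro t ht
    rw [abs_mul, abs_of_pos hpos,
      abs_of_nonneg (Real.rpow_nonneg (abs_nonneg t) ε)]
    nlinarith [Real.rpow_le_one (abs_nonneg t) ht hε.le]
  -- one-sided derivative lemmas at ±1
  have hg1 : HasDerivAt (fun x : ℝ => x * |x| ^ ε) (1 + ε) 1 := by
    simpa using gA hε (one_ne_zero)
  have hgm1 : HasDerivAt (fun x : ℝ => x * |x| ^ ε) (1 + ε) (-1) := by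
    simpa using gA hε (s := -1) (by norm_num)
  have key : ∃ d : ℝ, HasDerivAt f d s ∧ |d| ≤ 1 + ε := by
    rcases lt_trichotomy (|s|) 1 with h | h | h
    · refine ⟨if s = 0 then 0 else (1 + ε) * |s| ^ ε, ?_, ?_⟩
      · have heq : f =ᶠ[nhds s] fun x => x * |x| ^ ε := by
          have hev : ∀ᶠ x : ℝ in nhds s, |x| < 1 :=
            (continuous_abs.continuousAt (x := s)).eventually_lt_const h
          filter_upwards [hev] with x hx using hf₁ x hx.le
        rcases eq_or_ne s 0 with rfl | hs
        · simpa using (gB hε).congr_of_eventuallyEq heq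
        · simpa [hs] using (gA hε hs).congr_of_eventuallyEq heq
      · split
        · simpa using hpos.le
        · exact hbd s h.le
    · rcases (abs_eq (by norm_num : (0:ℝ) ≤ 1)).mp h with rfl | rfl
      · refine ⟨1 + ε, ?_, by rw [abs_of_pos hpos]⟩
        have hleft : HasDerivWithinAt f (1 + ε) (Iic 1) 1 := by
          refine (hg1.hasDerivWithinAt (s := Iic 1)).congr_of_eventuallyEq ?_
            (hf₁ 1 (by simp))
          have hev : ∀ᶠ x : ℝ in nhdsWithin 1 (Iic 1), -1 < x :=
            eventually_nhdsWithin_of_eventually_nhds (eventually_gt_nhds (by norm_num))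
          filter_upwards [hev, self_mem_nhdsWithin] with x h1 h2
          exact hf₁ x (abs_le.mpr ⟨h1.le, h2⟩)
        have hright : HasDerivWithinAt f (1 + ε) (Ici 1) 1 := by
          refine ((glin (ε := ε) (ε * 1) 1).hasDerivWithinAt (s := Ici 1)).congr_of_mem
            ?_ (by simp)
          intro x hx
          have hx0 : (0:ℝ) < x := lt_of_lt_of_le one_pos hx
          rw [hf₂ x (by rw [abs_of_pos hx0]; exact hx), Real.sign_of_pos hx0]
        have := hleft.union hright
        rw [Iic_union_Ici] at this
        exact hasDerivWithinAt_univ.mp this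
      · refine ⟨1 + ε, ?_, by rw [abs_of_pos hpos]⟩
        have hright : HasDerivWithinAt f (1 + ε) (Ici (-1)) (-1) := by
          refine (hgm1.hasDerivWithinAt (s := Ici (-1))).congr_of_eventuallyEq ?_
            (hf₁ (-1) (by simp))
          have hev : ∀ᶠ x : ℝ in nhdsWithin (-1) (Ici (-1)), x < 1 :=
            eventually_nhdsWithin_of_eventually_nhds (eventually_lt_nhds (by norm_num))
          filter_upwards [hev, self_mem_nhdsWithin] with x h1 h2
          exact hf₁ x (abs_le.mpr ⟨h2, h1.le⟩)
        have hleft : HasDerivWithinAt f (1 + ε) (Iic (-1)) (-1) := by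
          refine ((glin (ε := ε) (ε * (-1)) (-1)).hasDerivWithinAt (s := Iic (-1))).congr_of_mem
            ?_ (by simp)
          intro x hx
          have hx0 : x < 0 := lt_of_le_of_lt hx (by norm_num)
          rw [hf₂ x (by rw [abs_of_neg hx0]; linarith [mem_Iic.mp hx]),
            Real.sign_of_neg hx0]
        have := hleft.union hright
        rw [Iic_union_Ici] at this
        exact hasDerivWithinAt_univ.mp this
    · refine ⟨1 + ε, ?_, by rw [abs_of_pos hpos]⟩
      rcases lt_abs.mp h with h1 | h1
      · apply ((glin (ε := ε) (ε * 1) s)).congr_of_eventuallyEq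
        filter_upwards [eventually_gt_nhds h1] with x hx
        have hx0 : (0:ℝ) < x := lt_trans one_pos hx
        rw [hf₂ x (by rw [abs_of_pos hx0]; exact hx.le), Real.sign_of_pos hx0]
      · apply ((glin (ε := ε) (ε * (-1)) s)).congr_of_eventuallyEq
        have hs1 : s < -1 := by linarith
        filter_upwards [eventually_lt_nhds hs1] with x hx
        have hx0 : x < 0 := lt_trans hx (by norm_num)
        rw [hf₂ x (by rw [abs_of_neg hx0]; linarith), Real.sign_of_neg hx0]
  obtain ⟨d, hd, hbd'⟩ := key
  exact ⟨hd.differentiableAt, by rw [hd.deriv]; exact hbd', by linarith⟩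
end

section
/- Let Ω ⊆ ℝ³ be open, λ, μ, β ∈ ℝ, let u, v : Ω → ℝ be C² functions satisfying −Δu + λu = u³ − βuv² and −Δv + μv = v³ − βvu² pointwise on Ω, and let V : Ω → ℝ³ be of class C¹. Set Q(u,v) := u⁴ + v⁴ − 2βu²v² − 2λu² − 2μv² and W := ⟨∇u, V⟩∇u − (1/2)|∇u|²V + ⟨∇v, V⟩∇v − (1/2)|∇v|²V + (1/4)Q(u,v)V. Then at every x ∈ Ω, div W = Σ_{i,k=1}^{3} ∂u/∂xᵢ · ∂u/∂xₖ · ∂Vᵢ/∂xₖ + Σ_{i,k=1}^{3} ∂v/∂xᵢ · ∂v/∂xₖ · ∂Vᵢ/∂xₖ − (1/2)(|∇u|² + |∇v|²) div V + (1/4)Q(u,v) div V. -/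
/-- Partial derivative of `f` in the `i`-th coordinate direction. -/
noncomputable def pd (f : (Fin 3 → ℝ) → ℝ) (i : Fin 3) (x : Fin 3 → ℝ) : ℝ :=
  fderiv ℝ f x (Pi.single i 1)

/-- The Laplacian: sum of the second partial derivatives along the coordinate directions. -/
noncomputable def lap (f : (Fin 3 → ℝ) → ℝ) (x : Fin 3 → ℝ) : ℝ :=
  ∑ i : Fin 3, pd (pd f i) i x

theorem pd_eq' {f : (Fin 3 → ℝ) → ℝ} {D : (Fin 3 → ℝ) →L[ℝ] ℝ} {x : Fin 3 → ℝ}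
    (h : HasFDerivAt f D x) (k : Fin 3) : pd f k x = D (Pi.single k 1) := by
  unfold pd; rw [h.fderiv]

section lemmas
variable {f g : (Fin 3 → ℝ) → ℝ} {x : Fin 3 → ℝ} {k : Fin 3}

theorem pd_add (hf : DifferentiableAt ℝ f x) (hg : DifferentiableAt ℝ g x) :
    pd (fun y => f y + g y) k x = pd f k x + pd g k x := by
  rw [pd_eq' (hf.hasFDerivAt.fun_add hg.hasFDerivAt)]; simp [pd]

theorem pd_sub (hf : DifferentiableAt ℝ f x) (hg : DifferentiableAt ℝ g x) :
    pd (fun y => f y - g y) k x = pd f k x - pd g k x := by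
  rw [pd_eq' (hf.hasFDerivAt.fun_sub hg.hasFDerivAt)]; simp [pd]

theorem pd_mul (hf : DifferentiableAt ℝ f x) (hg : DifferentiableAt ℝ g x) :
    pd (fun y => f y * g y) k x = pd f k x * g x + f x * pd g k x := by
  rw [pd_eq' (hf.hasFDerivAt.fun_mul hg.hasFDerivAt)]; simp [pd]; ring

theorem pd_const_mul (c : ℝ) (hf : DifferentiableAt ℝ f x) :
    pd (fun y => c * f y) k x = c * pd f k x := by
  rw [pd_eq' (hf.hasFDerivAt.const_mul c)]; simp [pd]

theorem pd_sum {F : Fin 3 → (Fin 3 → ℝ) → ℝ} (hF : ∀ i, DifferentiableAt ℝ (F i) x) :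
    pd (fun y => ∑ i : Fin 3, F i y) k x = ∑ i : Fin 3, pd (F i) k x := by
  rw [pd_eq' (HasFDerivAt.fun_sum (fun i _ => (hF i).hasFDerivAt))]
  simp [pd]

theorem pd_pow (hf : DifferentiableAt ℝ f x) (n : ℕ) :
    pd (fun y => f y ^ n) k x = n * f x ^ (n - 1) * pd f k x := by
  induction n with
  | zero => simp [pd]
  | succ m ih =>
    have h1 : (fun y => f y ^ (m + 1)) = fun y => f y ^ m * f y := by
      funext y; ring
    rw [h1, pd_mul (hf.fun_pow m) hf, ih]
    cases m with
    | zero => simp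
    | succ m' => simp only [Nat.add_sub_cancel]; push_cast; ring

end lemmas

theorem stmt_9 (Ω : Set (Fin 3 → ℝ)) (hΩ : IsOpen Ω) (lam mu β : ℝ)
    (u v : (Fin 3 → ℝ) → ℝ) (hu : ContDiffOn ℝ 2 u Ω) (hv : ContDiffOn ℝ 2 v Ω)
    (hequ : ∀ x ∈ Ω, -lap u x + lam * u x = (u x) ^ 3 - β * u x * (v x) ^ 2)
    (heqv : ∀ x ∈ Ω, -lap v x + mu * v x = (v x) ^ 3 - β * v x * (u x) ^ 2)
    (V : (Fin 3 → ℝ) → (Fin 3 → ℝ)) (hV : ContDiffOn ℝ 1 V Ω)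
    (Q : (Fin 3 → ℝ) → ℝ)
    (hQ : Q = fun y => (u y) ^ 4 + (v y) ^ 4 - 2 * β * (u y) ^ 2 * (v y) ^ 2
      - 2 * lam * (u y) ^ 2 - 2 * mu * (v y) ^ 2)
    -- components of W = ⟨∇u,V⟩∇u − (1/2)|∇u|²V + ⟨∇v,V⟩∇v − (1/2)|∇v|²V + (1/4)Q(u,v)V
    (W : Fin 3 → (Fin 3 → ℝ) → ℝ)
    (hW : ∀ k, W k = fun y =>
      (∑ i : Fin 3, pd u i y * V y i) * pd u k y
        - (1 / 2) * (∑ i : Fin 3, (pd u i y) ^ 2) * V y k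
        + (∑ i : Fin 3, pd v i y * V y i) * pd v k y
        - (1 / 2) * (∑ i : Fin 3, (pd v i y) ^ 2) * V y k
        + (1 / 4) * Q y * V y k) :
    ∀ x ∈ Ω,
      (∑ k : Fin 3, pd (W k) k x)
        = (∑ i : Fin 3, ∑ k : Fin 3, pd u i x * pd u k x * pd (fun y => V y i) k x)
          + (∑ i : Fin 3, ∑ k : Fin 3, pd v i x * pd v k x * pd (fun y => V y i) k x)
          - (1 / 2) * ((∑ i : Fin 3, (pd u i x) ^ 2) + (∑ i : Fin 3, (pd v i x) ^ 2))
              * (∑ k : Fin 3, pd (fun y => V y k) k x)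
          + (1 / 4) * Q x * (∑ k : Fin 3, pd (fun y => V y k) k x) := by
  intro x hx
  have hmem : Ω ∈ nhds x := hΩ.mem_nhds hx
  have hcu : ContDiffAt ℝ 2 u x := hu.contDiffAt hmem
  have hcv : ContDiffAt ℝ 2 v x := hv.contDiffAt hmem
  have du : DifferentiableAt ℝ u x := hcu.differentiableAt two_ne_zero
  have dv : DifferentiableAt ℝ v x := hcv.differentiableAt two_ne_zero
  have hfdu : DifferentiableAt ℝ (fderiv ℝ u) x :=
    (hcu.fderiv_right (le_refl 2)).differentiableAt one_ne_zero
  have hfdv : DifferentiableAt ℝ (fderiv ℝ v) x :=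
    (hcv.fderiv_right (le_refl 2)).differentiableAt one_ne_zero
  have dpu : ∀ i, DifferentiableAt ℝ (pd u i) x :=
    fun i => hfdu.clm_apply (differentiableAt_const _)
  have dpv : ∀ i, DifferentiableAt ℝ (pd v i) x :=
    fun i => hfdv.clm_apply (differentiableAt_const _)
  have dV : DifferentiableAt ℝ V x := (hV.contDiffAt hmem).differentiableAt one_ne_zero
  have dVi : ∀ i, DifferentiableAt ℝ (fun y => V y i) x := differentiableAt_pi.mp dV
  -- symmetry of second derivatives
  have h2u : ∀ i k : Fin 3, pd (pd u i) k x
      = fderiv ℝ (fderiv ℝ u) x (Pi.single k 1) (Pi.single i 1) := by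
    intro i k
    have h : pd u i = fun y => fderiv ℝ u y (Pi.single i 1) := rfl
    rw [pd, h, fderiv_clm_apply hfdu (differentiableAt_const _)]
    simp
  have h2v : ∀ i k : Fin 3, pd (pd v i) k x
      = fderiv ℝ (fderiv ℝ v) x (Pi.single k 1) (Pi.single i 1) := by
    intro i k
    have h : pd v i = fun y => fderiv ℝ v y (Pi.single i 1) := rfl
    rw [pd, h, fderiv_clm_apply hfdv (differentiableAt_const _)]
    simp
  have hsymu : ∀ i k : Fin 3, pd (pd u i) k x = pd (pd u k) i x := by
    have hs := hcu.isSymmSndFDerivAt (by simp)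
    intro i k; rw [h2u i k, h2u k i, hs]
  have hsymv : ∀ i k : Fin 3, pd (pd v i) k x = pd (pd v k) i x := by
    have hs := hcv.isSymmSndFDerivAt (by simp)
    intro i k; rw [h2v i k, h2v k i, hs]
  -- differentiability of the building blocks
  have dAu : DifferentiableAt ℝ (fun y => ∑ i : Fin 3, pd u i y * V y i) x :=
    DifferentiableAt.fun_sum fun i _ => (dpu i).fun_mul (dVi i)
  have dAv : DifferentiableAt ℝ (fun y => ∑ i : Fin 3, pd v i y * V y i) x :=
    DifferentiableAt.fun_sum fun i _ => (dpv i).fun_mul (dVi i)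
  have dSu : DifferentiableAt ℝ (fun y => ∑ i : Fin 3, (pd u i y) ^ 2) x :=
    DifferentiableAt.fun_sum fun i _ => (dpu i).fun_pow 2
  have dSv : DifferentiableAt ℝ (fun y => ∑ i : Fin 3, (pd v i y) ^ 2) x :=
    DifferentiableAt.fun_sum fun i _ => (dpv i).fun_pow 2
  have dQ : DifferentiableAt ℝ Q x := by
    rw [hQ]
    exact ((((du.fun_pow 4).fun_add (dv.fun_pow 4)).fun_sub
      (((differentiableAt_const (2 * β)).fun_mul (du.fun_pow 2)).fun_mul (dv.fun_pow 2))).fun_sub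
      ((differentiableAt_const (2 * lam)).fun_mul (du.fun_pow 2))).fun_sub
      ((differentiableAt_const (2 * mu)).fun_mul (dv.fun_pow 2))
  -- derivatives of the building blocks
  have hA : ∀ k, pd (fun y => ∑ i : Fin 3, pd u i y * V y i) k x
      = ∑ i : Fin 3, (pd (pd u i) k x * V x i + pd u i x * pd (fun y => V y i) k x) := by
    intro k
    rw [pd_sum (fun i => (dpu i).fun_mul (dVi i))]
    have h : ∀ i : Fin 3, pd (fun y => pd u i y * V y i) k x
        = pd (pd u i) k x * V x i + pd u i x * pd (fun y => V y i) k x :=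
      fun i => pd_mul (dpu i) (dVi i)
    simp only [h]
  have hAv : ∀ k, pd (fun y => ∑ i : Fin 3, pd v i y * V y i) k x
      = ∑ i : Fin 3, (pd (pd v i) k x * V x i + pd v i x * pd (fun y => V y i) k x) := by
    intro k
    rw [pd_sum (fun i => (dpv i).fun_mul (dVi i))]
    have h : ∀ i : Fin 3, pd (fun y => pd v i y * V y i) k x
        = pd (pd v i) k x * V x i + pd v i x * pd (fun y => V y i) k x :=
      fun i => pd_mul (dpv i) (dVi i)
    simp only [h]
  have hB : ∀ k, pd (fun y => ∑ i : Fin 3, (pd u i y) ^ 2) k x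
      = ∑ i : Fin 3, 2 * pd u i x * pd (pd u i) k x := by
    intro k
    rw [pd_sum (fun i => (dpu i).fun_pow 2)]
    have h : ∀ i : Fin 3, pd (fun y => (pd u i y) ^ 2) k x
        = 2 * pd u i x * pd (pd u i) k x := by
      intro i; rw [pd_pow (dpu i) 2]; norm_num
    simp only [h]
  have hBv : ∀ k, pd (fun y => ∑ i : Fin 3, (pd v i y) ^ 2) k x
      = ∑ i : Fin 3, 2 * pd v i x * pd (pd v i) k x := by
    intro k
    rw [pd_sum (fun i => (dpv i).fun_pow 2)]
    have h : ∀ i : Fin 3, pd (fun y => (pd v i y) ^ 2) k x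
        = 2 * pd v i x * pd (pd v i) k x := by
      intro i; rw [pd_pow (dpv i) 2]; norm_num
    simp only [h]
  have hQd : ∀ k, pd Q k x
      = 4 * (u x) ^ 3 * pd u k x + 4 * (v x) ^ 3 * pd v k x
        - 4 * β * u x * (v x) ^ 2 * pd u k x - 4 * β * (u x) ^ 2 * v x * pd v k x
        - 4 * lam * u x * pd u k x - 4 * mu * v x * pd v k x := by
    intro k
    conv_lhs => rw [hQ]
    rw [pd_sub ((((du.fun_pow 4).fun_add (dv.fun_pow 4)).fun_sub
          (((differentiableAt_const (2 * β)).fun_mul (du.fun_pow 2)).fun_mul (dv.fun_pow 2))).fun_sub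
          ((differentiableAt_const (2 * lam)).fun_mul (du.fun_pow 2)))
        ((differentiableAt_const (2 * mu)).fun_mul (dv.fun_pow 2)),
      pd_sub (((du.fun_pow 4).fun_add (dv.fun_pow 4)).fun_sub
          (((differentiableAt_const (2 * β)).fun_mul (du.fun_pow 2)).fun_mul (dv.fun_pow 2)))
        ((differentiableAt_const (2 * lam)).fun_mul (du.fun_pow 2)),
      pd_sub ((du.fun_pow 4).fun_add (dv.fun_pow 4))
        (((differentiableAt_const (2 * β)).fun_mul (du.fun_pow 2)).fun_mul (dv.fun_pow 2)),
      pd_add (du.fun_pow 4) (dv.fun_pow 4),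
      pd_mul ((differentiableAt_const (2 * β)).fun_mul (du.fun_pow 2)) (dv.fun_pow 2),
      pd_mul (differentiableAt_const (2 * β)) (du.fun_pow 2),
      pd_const_mul (2 * lam) (du.fun_pow 2),
      pd_const_mul (2 * mu) (dv.fun_pow 2),
      pd_pow du 4, pd_pow dv 4, pd_pow du 2, pd_pow dv 2]
    have hc : ∀ k : Fin 3, pd (fun _ : Fin 3 → ℝ => 2 * β) k x = 0 := by
      intro k; simp [pd]
    rw [hc]
    norm_num
    ring
  -- the divergence of each component of W
  have key : ∀ k, pd (W k) k x
      = (∑ i : Fin 3, (pd (pd u i) k x * V x i + pd u i x * pd (fun y => V y i) k x))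
          * pd u k x
        + (∑ i : Fin 3, pd u i x * V x i) * pd (pd u k) k x
        - (1 / 2) * ((∑ i : Fin 3, 2 * pd u i x * pd (pd u i) k x) * V x k
            + (∑ i : Fin 3, (pd u i x) ^ 2) * pd (fun y => V y k) k x)
        + ((∑ i : Fin 3, (pd (pd v i) k x * V x i + pd v i x * pd (fun y => V y i) k x))
          * pd v k x
        + (∑ i : Fin 3, pd v i x * V x i) * pd (pd v k) k x)
        - (1 / 2) * ((∑ i : Fin 3, 2 * pd v i x * pd (pd v i) k x) * V x k
            + (∑ i : Fin 3, (pd v i x) ^ 2) * pd (fun y => V y k) k x)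
        + (1 / 4) * (pd Q k x * V x k + Q x * pd (fun y => V y k) k x) := by
    intro k
    rw [hW]
    rw [pd_add ((((dAu.fun_mul (dpu k)).fun_sub ((dSu.const_mul (1/2)).fun_mul (dVi k))).fun_add
          (dAv.fun_mul (dpv k))).fun_sub ((dSv.const_mul (1/2)).fun_mul (dVi k)))
        ((dQ.const_mul (1/4)).fun_mul (dVi k)),
      pd_sub (((dAu.fun_mul (dpu k)).fun_sub ((dSu.const_mul (1/2)).fun_mul (dVi k))).fun_add
          (dAv.fun_mul (dpv k))) ((dSv.const_mul (1/2)).fun_mul (dVi k)),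
      pd_add ((dAu.fun_mul (dpu k)).fun_sub ((dSu.const_mul (1/2)).fun_mul (dVi k)))
        (dAv.fun_mul (dpv k)),
      pd_sub (dAu.fun_mul (dpu k)) ((dSu.const_mul (1/2)).fun_mul (dVi k)),
      pd_mul dAu (dpu k),
      pd_mul (dSu.const_mul (1/2)) (dVi k),
      pd_const_mul (1/2) dSu,
      pd_mul dAv (dpv k),
      pd_mul (dSv.const_mul (1/2)) (dVi k),
      pd_const_mul (1/2) dSv,
      pd_mul (dQ.const_mul (1/4)) (dVi k),
      pd_const_mul (1/4) dQ,
      hA k, hAv k, hB k, hBv k]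
    ring
  simp only [key]
  simp only [hQd]
  have hequx := hequ x hx
  have heqvx := heqv x hx
  simp only [lap] at hequx heqvx
  simp only [Fin.sum_univ_three] at hequx heqvx ⊢
  linear_combination
    (V x 0 * pd u 1 x) * hsymu 0 1 + (V x 0 * pd u 2 x) * hsymu 0 2
      + (V x 1 * pd u 0 x) * hsymu 1 0 + (V x 1 * pd u 2 x) * hsymu 1 2
      + (V x 2 * pd u 0 x) * hsymu 2 0 + (V x 2 * pd u 1 x) * hsymu 2 1
      + (V x 0 * pd v 1 x) * hsymv 0 1 + (V x 0 * pd v 2 x) * hsymv 0 2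
      + (V x 1 * pd v 0 x) * hsymv 1 0 + (V x 1 * pd v 2 x) * hsymv 1 2
      + (V x 2 * pd v 0 x) * hsymv 2 0 + (V x 2 * pd v 1 x) * hsymv 2 1
      - (pd u 0 x * V x 0 + pd u 1 x * V x 1 + pd u 2 x * V x 2) * hequx
      - (pd v 0 x * V x 0 + pd v 1 x * V x 1 + pd v 2 x * V x 2) * heqvx
end
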